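/- arXiv:0902.2514 — 2 statements merged into one kernel-verified Lean document; each statement's English description precedes it below -/
import Mathlib

section
/- For every real number t > -1/2, the inequality Γ((t+1)/2)/Γ((t+2)/2) < 2/√(2t+1) holds, where Γ denotes Euler's gamma function. -/
open Real Filter

lemma gamma_cs (x : ℝ) (hx : 0 < x) :
    Gamma (x + 1) ^ 2 ≤ Gamma (x + 1/2) * Gamma (x + 3/2) := by
  have h1 : (0:ℝ) < x + 1/2 := by linarith
  have h2 : (0:ℝ) < x + 3/2 := by linarith
  have h := Real.convexOn_log_Gamma.2 (Set.mem_Ioi.2 h1) (Set.mem_Ioi.2 h2)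
    (by norm_num : (0:ℝ) ≤ 1/2) (by norm_num : (0:ℝ) ≤ 1/2) (by norm_num)
  simp only [smul_eq_mul, Function.comp_apply] at h
  have hcomb : (1/2 : ℝ) * (x + 1/2) + (1/2 : ℝ) * (x + 3/2) = x + 1 := by ring
  rw [hcomb] at h
  have hA := Real.Gamma_pos_of_pos h1
  have hB := Real.Gamma_pos_of_pos h2
  have : Real.log (Gamma (x+1) ^ 2) ≤ Real.log (Gamma (x+1/2) * Gamma (x+3/2)) := by
    rw [Real.log_pow, Real.log_mul (ne_of_gt hA) (ne_of_gt hB)]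
    push_cast
    linarith
  exact (Real.log_le_log_iff (by positivity) (by positivity)).1 this

lemma gamma_shift (x : ℝ) (hx : 0 < x) : Gamma (x + 3/2) = (x + 1/2) * Gamma (x + 1/2) := by
  have : x + 3/2 = (x + 1/2) + 1 := by ring
  rw [this, Real.Gamma_add_one (by linarith : x + (1:ℝ)/2 ≠ 0)]

/-- key quadratic inequality: x² Γ(x)² ≤ (x+1/2) Γ(x+1/2)²  -/
lemma gamma_sq_lower (x : ℝ) (hx : 0 < x) :
    x^2 * Gamma x ^ 2 ≤ (x + 1/2) * Gamma (x + 1/2) ^ 2 := by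
  have h := gamma_cs x hx
  rw [Real.Gamma_add_one (ne_of_gt hx), gamma_shift x hx] at h
  nlinarith [Real.Gamma_pos_of_pos hx, Real.Gamma_pos_of_pos (by linarith : (0:ℝ) < x + 1/2)]

noncomputable def gfun (x : ℝ) : ℝ := Gamma (x + 1/2) ^ 2 / (Gamma x ^ 2 * (x - 1/4))

lemma gfun_lower (x : ℝ) (hx : 1/4 < x) :
    x^2 / ((x + 1/2) * (x - 1/4)) ≤ gfun x := by
  have hx0 : (0:ℝ) < x := by linarith
  have hG := Real.Gamma_pos_of_pos hx0
  have hG2 := Real.Gamma_pos_of_pos (by linarith : (0:ℝ) < x + 1/2)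
  have hd1 : (0:ℝ) < Gamma x ^ 2 * (x - 1/4) := mul_pos (pow_pos hG 2) (by linarith)
  have hd2 : (0:ℝ) < (x + 1/2) * (x - 1/4) := mul_pos (by linarith) (by linarith)
  rw [gfun, div_le_div_iff₀ hd2 hd1]
  nlinarith [mul_le_mul_of_nonneg_right (gamma_sq_lower x hx0) (by linarith : (0:ℝ) ≤ x - 1/4)]

lemma gfun_descent (x : ℝ) (hx : 1/4 < x) : gfun (x + 1) ≤ gfun x := by
  have hx0 : (0:ℝ) < x := by linarith
  have hG := Real.Gamma_pos_of_pos hx0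
  have hG2 := Real.Gamma_pos_of_pos (by linarith : (0:ℝ) < x + 1/2)
  have e1 : x + 1 + 1/2 = x + 3/2 := by ring
  have hd1 : (0:ℝ) < (x * Gamma x) ^ 2 * (x + 1 - 1/4) := by
    have : (0:ℝ) < x * Gamma x := mul_pos hx0 hG
    have h' : (0:ℝ) < x + 1 - 1/4 := by linarith
    positivity
  have hd2 : (0:ℝ) < Gamma x ^ 2 * (x - 1/4) := mul_pos (pow_pos hG 2) (by linarith)
  rw [gfun, gfun, e1, gamma_shift x hx0, Real.Gamma_add_one (ne_of_gt hx0),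
    div_le_div_iff₀ hd1 hd2]
  nlinarith [mul_pos (pow_pos hG 2) (pow_pos hG2 2)]

lemma gfun_chain (x : ℝ) (hx : 1/4 < x) : ∀ n : ℕ, gfun (x + n) ≤ gfun x := by
  intro n
  induction n with
  | zero => simp
  | succ n ih =>
    have h1 : (1:ℝ)/4 < x + n := by
      have : (0:ℝ) ≤ n := Nat.cast_nonneg n
      linarith
    have := gfun_descent (x + n) h1
    have e : x + (n+1:ℕ) = (x + n) + 1 := by push_cast; ring
    rw [e]
    exact le_trans this ih

lemma ratio_tendsto : Tendsto (fun y : ℝ => y^2 / ((y + 1/2) * (y - 1/4))) atTop (nhds 1) := by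
  have h0 : Tendsto (fun y : ℝ => y⁻¹) atTop (nhds 0) := tendsto_inv_atTop_zero
  have h1 : Tendsto (fun y : ℝ => (1 + (1/2) * y⁻¹) * (1 - (1/4) * y⁻¹)) atTop (nhds 1) := by
    have := ((tendsto_const_nhds (x := (1:ℝ))).add (h0.const_mul (1/2))).mul
      ((tendsto_const_nhds (x := (1:ℝ))).sub (h0.const_mul (1/4)))
    simpa using this
  have h2 : Tendsto (fun y : ℝ => ((1 + (1/2) * y⁻¹) * (1 - (1/4) * y⁻¹))⁻¹) atTop (nhds 1) := by
    simpa using h1.inv₀ (by norm_num)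
  refine h2.congr' ?_
  filter_upwards [eventually_gt_atTop (1:ℝ)] with y hy
  have hy0 : y ≠ 0 := by linarith
  field_simp

theorem kazarinoff_gamma_ratio_inequality (t : ℝ) (ht : -1 / 2 < t) :
    Gamma ((t + 1) / 2) / Gamma ((t + 2) / 2) < 2 / Real.sqrt (2 * t + 1) := by
  set s : ℝ := (t + 1) / 2 with hs
  have hs4 : 1/4 < s := by rw [hs]; linarith
  have hs0 : (0:ℝ) < s := by linarith
  have hG := Real.Gamma_pos_of_pos hs0
  have hG2 := Real.Gamma_pos_of_pos (by linarith : (0:ℝ) < s + 1/2)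
  -- step 1 : gfun (s+1) ≥ 1
  have hge : (1:ℝ) ≤ gfun (s + 1) := by
    have hs1 : (1:ℝ)/4 < s + 1 := by linarith
    have htend : Tendsto (fun n : ℕ => (s + 1 + n)^2 / ((s + 1 + n + 1/2) * (s + 1 + n - 1/4)))
        atTop (nhds 1) := by
      have hy : Tendsto (fun n : ℕ => s + 1 + (n:ℝ)) atTop atTop :=
        tendsto_atTop_add_const_left _ _ tendsto_natCast_atTop_atTop
      exact ratio_tendsto.comp hy
    refine le_of_tendsto htend ?_
    filter_upwards with n
    have hn4 : (1:ℝ)/4 < s + 1 + n := by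
      have : (0:ℝ) ≤ n := Nat.cast_nonneg n
      linarith
    calc (s + 1 + n)^2 / ((s + 1 + n + 1/2) * (s + 1 + n - 1/4))
        ≤ gfun (s + 1 + n) := gfun_lower _ hn4
      _ ≤ gfun (s + 1) := by
          have := gfun_chain (s+1) hs1 n
          simpa [add_assoc] using this
  -- step 2 : strict inequality Γ(s+1/2)² > (s - 1/4) Γ(s)²
  have hkey : (s - 1/4) * Gamma s ^ 2 < Gamma (s + 1/2) ^ 2 := by
    have h1 : (s + 3/4) * Gamma (s+1) ^ 2 ≤ Gamma (s + 1 + 1/2) ^ 2 := by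
      rw [gfun] at hge
      have hGp := Real.Gamma_pos_of_pos (by linarith : (0:ℝ) < s + 1)
      have hpos : (0:ℝ) < Gamma (s+1) ^ 2 * (s + 1 - 1/4) :=
        mul_pos (pow_pos hGp 2) (by linarith)
      rw [le_div_iff₀ hpos] at hge
      nlinarith [hge]
    have e1 : s + 1 + 1/2 = s + 3/2 := by ring
    rw [e1, gamma_shift s hs0, Real.Gamma_add_one (ne_of_gt hs0)] at h1
    have h2 : (s+1/2)^2 * ((s - 1/4) * Gamma s ^ 2) < (s+1/2)^2 * Gamma (s+1/2) ^ 2 := by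
      nlinarith [pow_pos hG 2]
    exact lt_of_mul_lt_mul_left h2 (by positivity)
  have hmain : Real.sqrt (s - 1/4) * Gamma s < Gamma (s + 1/2) := by
    have hsq : (Real.sqrt (s - 1/4) * Gamma s) ^ 2 < Gamma (s + 1/2) ^ 2 := by
      rw [mul_pow, Real.sq_sqrt (by linarith : (0:ℝ) ≤ s - 1/4)]
      exact hkey
    exact lt_of_pow_lt_pow_left₀ 2 (le_of_lt hG2) hsq
  -- translate to the goal
  have e2 : (t + 2) / 2 = s + 1/2 := by rw [hs]; ring
  have e3 : 2 * t + 1 = 4 * (s - 1/4) := by rw [hs]; ring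
  rw [e2, e3]
  have hsqrt4 : Real.sqrt (4 * (s - 1/4)) = 2 * Real.sqrt (s - 1/4) := by
    rw [show (4:ℝ) * (s - 1/4) = (2:ℝ)^2 * (s - 1/4) by ring, Real.sqrt_mul (by positivity),
      Real.sqrt_sq (by norm_num)]
  rw [hsqrt4]
  have hsp : (0:ℝ) < Real.sqrt (s - 1/4) := Real.sqrt_pos.2 (by linarith)
  rw [div_lt_div_iff₀ hG2 (by positivity)]
  calc Gamma s * (2 * Real.sqrt (s - 1/4)) = 2 * (Real.sqrt (s - 1/4) * Gamma s) := by ring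
    _ < 2 * Gamma (s + 1/2) := by linarith
end

section
/- For every integer n ≥ 2, the double inequality √((2n-3)/4) < Γ(n/2)/Γ((n-1)/2) ≤ √((n-1)²/(2n-1)) holds, where Γ denotes Euler's gamma function. -/
open Real Filter Topology

private noncomputable def gg (x : ℝ) : ℝ := Gamma (x + 1/2) / Gamma x

private lemma gamma_sq_le (x : ℝ) (hx : 0 < x) :
    Gamma (x + 1/2) ^ 2 ≤ Gamma x * Gamma (x + 1) := by
  have h1 : (0:ℝ) < x + 1 := by linarith
  have hc := Real.convexOn_log_Gamma.2 (Set.mem_Ioi.2 hx) (Set.mem_Ioi.2 h1)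
    (by norm_num : (0:ℝ) ≤ 1/2) (by norm_num : (0:ℝ) ≤ 1/2) (by norm_num)
  simp only [smul_eq_mul, Function.comp_apply] at hc
  have hmid : (1/2 : ℝ) * x + 1/2 * (x+1) = x + 1/2 := by ring
  rw [hmid] at hc
  have hG1 : 0 < Gamma (x + 1/2) := Gamma_pos_of_pos (by linarith)
  have hG2 : 0 < Gamma x := Gamma_pos_of_pos hx
  have hG3 : 0 < Gamma (x+1) := Gamma_pos_of_pos h1
  have := log_le_log_iff (by positivity : (0:ℝ) < Gamma (x+1/2)^2)
    (by positivity : (0:ℝ) < Gamma x * Gamma (x+1))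
  rw [← this, log_pow, log_mul hG2.ne' hG3.ne']
  push_cast
  linarith

private lemma gg_pos {x : ℝ} (hx : 0 < x) : 0 < gg x := by
  unfold gg
  exact div_pos (Gamma_pos_of_pos (by linarith)) (Gamma_pos_of_pos hx)

private lemma gg_sq_le {x : ℝ} (hx : 0 < x) : gg x ^ 2 ≤ x := by
  have hG2 : 0 < Gamma x := Gamma_pos_of_pos hx
  have h := gamma_sq_le x hx
  rw [Gamma_add_one hx.ne'] at h
  unfold gg
  rw [div_pow, div_le_iff₀ (by positivity)]
  nlinarith [sq_nonneg (Gamma x)]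

private lemma gg_refl {x : ℝ} (hx : 0 < x) : gg x * gg (x + 1/2) = x := by
  have hG1 : 0 < Gamma (x + 1/2) := Gamma_pos_of_pos (by linarith)
  have hG2 : 0 < Gamma x := Gamma_pos_of_pos hx
  unfold gg
  have h1 : x + 1/2 + 1/2 = x + 1 := by ring
  rw [h1, Gamma_add_one hx.ne']
  field_simp

private lemma gg_sq_ge {z : ℝ} (hz : 1/2 < z) : z - 1/2 ≤ gg z ^ 2 := by
  set y := z - 1/2 with hy
  have hy0 : 0 < y := by rw [hy]; linarith
  have hr : gg y * gg z = y := by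
    have : y + 1/2 = z := by rw [hy]; ring
    rw [← this]; exact gg_refl hy0
  have h1 : gg y ^ 2 ≤ y := gg_sq_le hy0
  have h2 : 0 < gg y := gg_pos hy0
  have h3 : gg z = y / gg y := by field_simp at hr ⊢; linarith [hr]
  rw [h3, div_pow, le_div_iff₀ (by positivity)]
  nlinarith

private lemma gg_step {x : ℝ} (hx : 0 < x) : gg (x+1) = gg x * (x + 1/2) / x := by
  have hG2 : 0 < Gamma x := Gamma_pos_of_pos hx
  unfold gg
  have h1 : x + 1 + 1/2 = (x + 1/2) + 1 := by ring
  rw [h1, Gamma_add_one (by positivity : x + 1/2 ≠ 0), Gamma_add_one hx.ne']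
  field_simp

private lemma sigma_step {x : ℝ} (hx : 1/2 ≤ x) :
    gg (x+1) ^ 2 / (x + 3/4) < gg x ^ 2 / (x - 1/4) := by
  have hx0 : 0 < x := by linarith
  have hgp : 0 < gg x := gg_pos hx0
  rw [gg_step hx0, div_lt_div_iff₀ (by linarith) (by linarith)]
  have expand : (gg x * (x + 1/2) / x) ^ 2 = gg x ^ 2 * (x+1/2)^2 / x^2 := by
    field_simp
  rw [expand, div_mul_eq_mul_div, div_lt_iff₀ (by positivity)]
  nlinarith [sq_nonneg (gg x), hgp]

private lemma sigma_chain {x : ℝ} (hx : 1/2 ≤ x) (k : ℕ) :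
    gg (x+1+k) ^ 2 / (x+1+k - 1/4) ≤ gg (x+1) ^ 2 / (x + 3/4) := by
  induction k with
  | zero => simp; norm_num; rw [show x + 1 - 1/4 = x + 3/4 by ring]
  | succ m ih =>
      have hstep := sigma_step (x := x+1+m) (by push_cast; linarith [Nat.cast_nonneg (α := ℝ) m])
      have he : x + 1 + ((m:ℝ)+1) = (x+1+m) + 1 := by ring
      push_cast
      rw [he]
      calc gg (x+1+m+1)^2 / (x+1+(m:ℝ)+1-1/4)
          = gg (x+1+m+1)^2 / ((x+1+m) + 3/4) := by ring_nf
        _ ≤ gg (x+1+m)^2 / (x+1+m - 1/4) := hstep.le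
        _ ≤ _ := by push_cast at ih; exact ih

private lemma key {x : ℝ} (hx : 1/2 ≤ x) : x - 1/4 < gg x ^ 2 := by
  have h0 : Tendsto (fun k:ℕ => x + 3/4 + (k:ℝ)) atTop atTop :=
    tendsto_atTop_add_const_left _ _ tendsto_natCast_atTop_atTop
  have h2 : Tendsto (fun k:ℕ => (1/4) / (x + 3/4 + (k:ℝ))) atTop (𝓝 0) :=
    Tendsto.div_atTop tendsto_const_nhds h0
  have hlim : Tendsto (fun k:ℕ => (x+1+(k:ℝ)-1/2)/(x+1+(k:ℝ)-1/4)) atTop (𝓝 1) := by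
    have heq : (fun k:ℕ => (x+1+(k:ℝ)-1/2)/(x+1+(k:ℝ)-1/4))
        = fun k:ℕ => 1 - (1/4) / (x + 3/4 + (k:ℝ)) := by
      funext k
      have hck : (0:ℝ) ≤ (k:ℝ) := Nat.cast_nonneg k
      have hd : x + 3/4 + (k:ℝ) ≠ 0 := by intro h; linarith
      rw [one_sub_div hd]
      congr 1 <;> ring
    rw [heq]
    simpa using tendsto_const_nhds.sub h2
  have hk : ∀ k : ℕ, (x+1+(k:ℝ)-1/2)/(x+1+(k:ℝ)-1/4) ≤ gg (x+1) ^ 2 / (x + 3/4) := by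
    intro k
    have hck : (0:ℝ) ≤ (k:ℝ) := Nat.cast_nonneg k
    have hge := gg_sq_ge (z := x+1+k) (by linarith)
    calc (x+1+(k:ℝ)-1/2)/(x+1+(k:ℝ)-1/4)
        ≤ gg (x+1+k) ^ 2 / (x+1+(k:ℝ)-1/4) := by
          have hdpos : (0:ℝ) < x+1+(k:ℝ)-1/4 := by linarith
          exact (div_le_div_iff_of_pos_right hdpos).mpr hge
      _ ≤ _ := sigma_chain hx k
  have h1 : 1 ≤ gg (x+1) ^ 2 / (x + 3/4) := le_of_tendsto hlim (Filter.Eventually.of_forall hk)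
  have h3 := sigma_step hx
  have h4 : (1:ℝ) < gg x ^ 2 / (x - 1/4) := lt_of_le_of_lt h1 h3
  have h5 : 0 < x - 1/4 := by linarith
  calc x - 1/4 = 1 * (x - 1/4) := by ring
    _ < gg x ^ 2 / (x - 1/4) * (x - 1/4) := by exact mul_lt_mul_of_pos_right h4 h5
    _ = gg x ^ 2 := div_mul_cancel₀ _ h5.ne'

theorem chu_gamma_ratio_inequality (n : ℕ) (hn : 2 ≤ n) :
    Real.sqrt ((2 * n - 3) / 4 : ℝ) < Gamma (n / 2) / Gamma ((n - 1) / 2) ∧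
      Gamma (n / 2) / Gamma ((n - 1) / 2) ≤ Real.sqrt (((n : ℝ) - 1) ^ 2 / (2 * n - 1)) := by
  have hn' : (2:ℝ) ≤ (n:ℝ) := by exact_mod_cast hn
  set x : ℝ := ((n:ℝ) - 1)/2 with hxdef
  have hx : 1/2 ≤ x := by rw [hxdef]; linarith
  have hx0 : 0 < x := by linarith
  have hratio : Gamma ((n:ℝ) / 2) / Gamma (((n:ℝ) - 1) / 2) = gg x := by
    unfold gg
    congr 1
    rw [hxdef]; ring
  have hkey := key hx
  have hpos := gg_pos hx0
  constructor
  · have h14 : ((2 * (n:ℝ) - 3) / 4) = x - 1/4 := by rw [hxdef]; ring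
    rw [hratio, h14]
    exact (Real.sqrt_lt' hpos).mpr hkey
  · have hkey2 := key (x := x + 1/2) (by linarith)
    have hrefl := gg_refl hx0
    have hsq : gg x ^ 2 * (x + 1/4) < x ^ 2 := by nlinarith [sq_nonneg (gg x), hpos]
    have h2n : (0:ℝ) < 2*(n:ℝ)-1 := by linarith
    rw [hratio, Real.le_sqrt' hpos, le_div_iff₀ h2n]
    rw [hxdef] at hsq
    nlinarith [hsq]
end
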